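/- Let X and Z be nonempty finite types and let p : X × Z → ℝ be a probability mass function (p ≥ 0 and ∑_{x,z} p(x,z) = 1), with marginals p_X(x) = ∑_z p(x,z) and p_Z(z) = ∑_x p(x,z). Then for every function f : X × Z → ℝ, ∑_{(x,z) : p(x,z) > 0} p(x,z) · log ( p(x,z) / (p_X(x) · p_Z(z)) ) ≥ ∑_{x,z} p(x,z) · f(x,z) − ∑_x p_X(x) · log ( ∑_z p_Z(z) · e^{f(x,z)} ). That is, the mutual information I(X;Z) is lower-bounded by the unnormalized variational (UBA) bound E_{p(x,z)}[f(x,z)] − E_{p_X}[log E_{p_Z}[e^{f(x,z')}]]. -/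

import Mathlib

open Finset

lemma sub_le_mul_log_aux {a b : ℝ} (ha : 0 < a) (hb : 0 < b) :
    a - b ≤ a * Real.log (a / b) := by
  have h := Real.log_le_sub_one_of_pos (div_pos hb ha)
  rw [Real.log_div hb.ne' ha.ne'] at h
  rw [Real.log_div ha.ne' hb.ne']
  have hb' : b / a - 1 = (b - a) / a := by field_simp
  rw [hb'] at h
  have h2 : (Real.log b - Real.log a) * a ≤ b - a := (le_div_iff₀ ha).mp h
  nlinarith

open Classical in
/-- **Unnormalized variational (UBA) lower bound on mutual information.**
For a joint pmf `p` on a finite product `X × Z` with marginals `pX`, `pZ`, and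
any critic `f : X × Z → ℝ`,
`I(X;Z) ≥ E_{p}[f] − E_{pX}[log E_{pZ}[e^{f}]]`. -/
theorem mutual_information_uba_lower_bound
    {X Z : Type*} [Fintype X] [Fintype Z] [Nonempty X] [Nonempty Z]
    (p : X × Z → ℝ) (hp0 : ∀ q, 0 ≤ p q) (hp1 : ∑ q : X × Z, p q = 1)
    (pX : X → ℝ) (hpX : ∀ x, pX x = ∑ z : Z, p (x, z))
    (pZ : Z → ℝ) (hpZ : ∀ z, pZ z = ∑ x : X, p (x, z))
    (f : X × Z → ℝ) :
    ∑ q ∈ Finset.univ.filter (fun q : X × Z => 0 < p q),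
        p q * Real.log (p q / (pX q.1 * pZ q.2))
      ≥ (∑ q : X × Z, p q * f q)
        - ∑ x : X, pX x * Real.log (∑ z : Z, pZ z * Real.exp (f (x, z))) := by
  classical
  set c : X → ℝ := fun x => ∑ z : Z, pZ z * Real.exp (f (x, z)) with hc
  set T := Finset.univ.filter (fun q : X × Z => 0 < p q) with hT
  have hzero : ∀ q : X × Z, q ∉ T → p q = 0 := by
    intro q hq
    simp only [hT, Finset.mem_filter, Finset.mem_univ, true_and, not_lt] at hq
    exact le_antisymm hq (hp0 q)
  have hpZ0 : ∀ z, 0 ≤ pZ z := fun z => (hpZ z) ▸ Finset.sum_nonneg fun x _ => hp0 _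
  have hpX0 : ∀ x, 0 ≤ pX x := fun x => (hpX x) ▸ Finset.sum_nonneg fun z _ => hp0 _
  have hsumpZ : ∑ z : Z, pZ z = 1 := by
    rw [← hp1, Fintype.sum_prod_type]
    rw [Finset.sum_comm]
    simp [hpZ]
  have hcpos : ∀ x, 0 < c x := by
    intro x
    have hz : ∃ z : Z, 0 < pZ z := by
      by_contra h
      push_neg at h
      have : ∑ z : Z, pZ z = 0 :=
        Finset.sum_eq_zero fun z _ => le_antisymm (h z) (hpZ0 z)
      rw [hsumpZ] at this; norm_num at this
    obtain ⟨z, hz⟩ := hz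
    exact Finset.sum_pos' (fun z _ => mul_nonneg (hpZ0 z) (Real.exp_pos _).le)
      ⟨z, Finset.mem_univ z, mul_pos hz (Real.exp_pos _)⟩
  -- restrict sums to T
  have hsum_f : ∑ q ∈ T, p q * f q = ∑ q : X × Z, p q * f q :=
    Finset.sum_subset (Finset.filter_subset _ _)
      (fun q _ hq => by rw [hzero q hq]; ring)
  have hsum_p : ∑ q ∈ T, p q = 1 := by
    rw [← hp1]
    exact Finset.sum_subset (Finset.filter_subset _ _) (fun q _ hq => hzero q hq)
  have hlogc : ∑ x : X, pX x * Real.log (c x) = ∑ q ∈ T, p q * Real.log (c q.1) := by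
    have h1 : ∑ x : X, pX x * Real.log (c x)
        = ∑ q : X × Z, p q * Real.log (c q.1) := by
      rw [Fintype.sum_prod_type]
      refine Finset.sum_congr rfl fun x _ => ?_
      rw [hpX x, Finset.sum_mul]
    rw [h1]
    exact (Finset.sum_subset (Finset.filter_subset _ _)
      (fun q _ hq => by rw [hzero q hq]; ring)).symm
  rw [ge_iff_le, ← hsum_f, hlogc]
  -- define the tilted measure b
  set b : X × Z → ℝ := fun q => pX q.1 * pZ q.2 * Real.exp (f q) / c q.1 with hb
  have hb0 : ∀ q, 0 ≤ b q := fun q =>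
    div_nonneg (mul_nonneg (mul_nonneg (hpX0 _) (hpZ0 _)) (Real.exp_pos _).le)
      (hcpos _).le
  have hsumb : ∑ q : X × Z, b q = 1 := by
    rw [Fintype.sum_prod_type]
    have : ∀ x : X, ∑ z : Z, b (x, z) = pX x := by
      intro x
      have : ∑ z : Z, b (x, z) = (pX x / c x) * ∑ z : Z, pZ z * Real.exp (f (x, z)) := by
        rw [Finset.mul_sum]
        refine Finset.sum_congr rfl fun z _ => ?_
        simp only [hb]
        field_simp
      have hcx : ∑ z : Z, pZ z * Real.exp (f (x, z)) = c x := rfl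
      rw [this, hcx, div_mul_eq_mul_div, mul_div_assoc,
        div_self (hcpos x).ne', mul_one]
    rw [Finset.sum_congr rfl fun x _ => this x, ← hp1, Fintype.sum_prod_type]
    exact Finset.sum_congr rfl fun x _ => hpX x
  -- termwise bound on T
  have hkey : ∀ q ∈ T, p q - b q ≤
      p q * Real.log (p q / (pX q.1 * pZ q.2)) - (p q * f q - p q * Real.log (c q.1)) := by
    intro q hq
    have hpq : 0 < p q := by
      simpa only [hT, Finset.mem_filter, Finset.mem_univ, true_and] using hq
    have hpXq : 0 < pX q.1 := by
      have : p (q.1, q.2) ≤ pX q.1 := by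
        rw [hpX]
        exact Finset.single_le_sum (fun z _ => hp0 (q.1, z)) (Finset.mem_univ q.2)
      exact lt_of_lt_of_le (by simpa using hpq) this
    have hpZq : 0 < pZ q.2 := by
      have : p (q.1, q.2) ≤ pZ q.2 := by
        rw [hpZ]
        exact Finset.single_le_sum (fun x _ => hp0 (x, q.2)) (Finset.mem_univ q.1)
      exact lt_of_lt_of_le (by simpa using hpq) this
    have hbq : 0 < b q :=
      div_pos (mul_pos (mul_pos hpXq hpZq) (Real.exp_pos _)) (hcpos _)
    have heq : p q * Real.log (p q / (pX q.1 * pZ q.2))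
        - (p q * f q - p q * Real.log (c q.1)) = p q * Real.log (p q / b q) := by
      rw [Real.log_div hpq.ne' (mul_pos hpXq hpZq).ne',
        Real.log_div hpq.ne' hbq.ne', hb]
      rw [Real.log_div (mul_pos (mul_pos hpXq hpZq) (Real.exp_pos _)).ne' (hcpos _).ne',
        Real.log_mul (mul_pos hpXq hpZq).ne' (Real.exp_pos _).ne',
        Real.log_mul hpXq.ne' hpZq.ne', Real.log_exp]
      ring
    rw [heq]
    exact sub_le_mul_log_aux hpq hbq
  have hsum_ge : ∑ q ∈ T, (p q - b q) ≤
      ∑ q ∈ T, (p q * Real.log (p q / (pX q.1 * pZ q.2))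
        - (p q * f q - p q * Real.log (c q.1))) :=
    Finset.sum_le_sum hkey
  have hlhs : 0 ≤ ∑ q ∈ T, (p q - b q) := by
    rw [Finset.sum_sub_distrib, hsum_p]
    have : ∑ q ∈ T, b q ≤ ∑ q : X × Z, b q :=
      Finset.sum_le_sum_of_subset_of_nonneg (Finset.filter_subset _ _)
        (fun q _ _ => hb0 q)
    rw [hsumb] at this
    linarith
  have := le_trans hlhs hsum_ge
  rw [Finset.sum_sub_distrib, Finset.sum_sub_distrib] at this
  linarith
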